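/- Let G be a 4-Ore graph with p(G) = 1.8 and let v be a vertex of G. Then every maximum independent set of D3(G) contains a vertex of the closed neighborhood of v in G. -/

import Mathlib

open SimpleGraph

/-- The degree of a vertex, as the cardinality of its neighbor set. -/
noncomputable def deg {V : Type} (G : SimpleGraph V) (v : V) : ℕ :=
  Nat.card (G.neighborSet v)

/-- The number of edges of a graph. -/
noncomputable def numEdges {V : Type} (G : SimpleGraph V) : ℕ :=
  Nat.card G.edgeSet

/-- The independence number of a graph. -/
noncomputable def indepNum {V : Type} (G : SimpleGraph V) : ℕ :=
  sSup {n | ∃ s : Set V, (∀ u ∈ s, ∀ v ∈ s, ¬ G.Adj u v) ∧ s.ncard = n}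

/-- The set of vertices of degree at most three. -/
noncomputable def D3set {V : Type} (G : SimpleGraph V) : Set V :=
  {v | deg G v ≤ 3}

/-- `D3(G)`: the subgraph induced by the vertices of degree at most three. -/
noncomputable def D3 {V : Type} (G : SimpleGraph V) : SimpleGraph (D3set G) :=
  G.induce (D3set G)

/-- The potential of a graph: `p(G) = 4.8 |V(G)| - 3 |E(G)| + 0.6 α(D3(G))`. -/
noncomputable def potential {V : Type} (G : SimpleGraph V) : ℚ :=
  (24/5 : ℚ) * Nat.card V - 3 * numEdges G + (3/5 : ℚ) * _root_.indepNum (D3 G)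

/-- The potential of a subset `R` of the vertices of `G`:
`p(R) = 4.8 |R| - 3 |E(G[R])| + 0.6 α(G[D3(G) ∩ R])`. -/
noncomputable def potentialOf {V : Type} (G : SimpleGraph V) (R : Set V) : ℚ :=
  (24/5 : ℚ) * R.ncard - 3 * numEdges (G.induce R)
    + (3/5 : ℚ) * _root_.indepNum (G.induce (D3set G ∩ R))

/-- A graph is `k`-critical if it is not `(k-1)`-colorable but every proper
subgraph is `(k-1)`-colorable. -/
def IsKCritical {V : Type} (G : SimpleGraph V) (k : ℕ) : Prop :=
  ¬ G.Colorable (k - 1) ∧ ∀ H : SimpleGraph V, H ≤ G → H ≠ G → H.Colorable (k - 1)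

/-- A graph has Ore-degree at most `d` if `d(u) + d(v) ≤ d` for every edge `uv`. -/
def OreDegreeAtMost {V : Type} (G : SimpleGraph V) (d : ℕ) : Prop :=
  ∀ u v, G.Adj u v → deg G u + deg G v ≤ d

/-- The Ore-composition of `G1` (edge-side, with replaced edge `xy`) and `G2`
(split-side, with split vertex `z` whose incident edges going to `A` are attached
to `x` and the remaining ones to `y`). -/
def oreCompose {V1 V2 : Type} (G1 : SimpleGraph V1) (G2 : SimpleGraph V2)
    (x y : V1) (z : V2) (A : Set V2) :
    SimpleGraph (V1 ⊕ {v : V2 // v ≠ z}) :=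
  SimpleGraph.fromRel (fun a b =>
    match a, b with
    | Sum.inl u, Sum.inl v =>
        G1.Adj u v ∧ ¬((u = x ∧ v = y) ∨ (u = y ∧ v = x))
    | Sum.inl u, Sum.inr v =>
        (u = x ∧ G2.Adj z v.1 ∧ v.1 ∈ A) ∨ (u = y ∧ G2.Adj z v.1 ∧ v.1 ∉ A)
    | Sum.inr _, Sum.inl _ => False
    | Sum.inr u, Sum.inr v => G2.Adj u.1 v.1)

/-- `G` is an Ore-composition of `G1` and `G2`: there are a replaced edge `xy` of
`G1`, a split vertex `z` of `G2`, and a splitting of the edges at `z` into two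
nonempty parts, such that `G` is isomorphic to the resulting composition. -/
def IsOreComposition {V V1 V2 : Type} (G : SimpleGraph V)
    (G1 : SimpleGraph V1) (G2 : SimpleGraph V2) : Prop :=
  ∃ (x y : V1) (z : V2) (A : Set V2),
    G1.Adj x y ∧ (∃ p, G2.Adj z p ∧ p ∈ A) ∧ (∃ q, G2.Adj z q ∧ q ∉ A) ∧
    Nonempty (G ≃g oreCompose G1 G2 x y z A)

/-- The family of `4`-Ore graphs: the smallest family of graphs containing `K4`
and closed under Ore-compositions. -/
inductive IsFourOre : ∀ {V : Type}, SimpleGraph V → Prop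
  | k4 {V : Type} (G : SimpleGraph V) :
      Nonempty (G ≃g completeGraph (Fin 4)) → IsFourOre G
  | comp {V V1 V2 : Type} (G : SimpleGraph V)
      (G1 : SimpleGraph V1) (G2 : SimpleGraph V2) :
      IsFourOre G1 → IsFourOre G2 → IsOreComposition G G1 G2 → IsFourOre G

/-- The boundary of a set `R`: the vertices of `R` with a neighbor outside `R`. -/
def boundary {V : Type} (G : SimpleGraph V) (R : Set V) : Set V :=
  {v | v ∈ R ∧ ∃ u, u ∉ R ∧ G.Adj v u}

/-- A proper subset `R` of the vertices with `|R| ≥ 2` is collapsible if in every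
proper 3-coloring of `G[R]` all vertices of the boundary of `R` get the same color. -/
def Collapsible {V : Type} (G : SimpleGraph V) (R : Set V) : Prop :=
  R ≠ Set.univ ∧ 2 ≤ R.ncard ∧
  ∀ φ : V → Fin 3, (∀ u ∈ R, ∀ v ∈ R, G.Adj u v → φ u ≠ φ v) →
    ∀ u ∈ boundary G R, ∀ v ∈ boundary G R, φ u = φ v

/-- The critical complement of a set `R`: identify the boundary of `R` to a single
vertex (the vertex `none`) and delete the rest of `R`. -/
def criticalComplement {V : Type} (G : SimpleGraph V) (R : Set V) :
    SimpleGraph (Option {v : V // v ∉ R}) :=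
  SimpleGraph.fromRel (fun a b =>
    match a, b with
    | some u, some v => G.Adj u.1 v.1
    | some u, none => ∃ w ∈ boundary G R, G.Adj u.1 w
    | none, some _ => False
    | none, none => False)

/-- A nonempty proper subset `R` with boundary `S` is cocollapsible if every vertex
of `S` has exactly one neighbor outside `R`, and for every non-constant list of
forbidden colors on `S` there is a proper 3-coloring of `G[R]` avoiding them. -/
def Cocollapsible {V : Type} (G : SimpleGraph V) (R : Set V) : Prop :=
  R.Nonempty ∧ R ≠ Set.univ ∧
  (∀ v ∈ boundary G R, ∃! u, u ∉ R ∧ G.Adj v u) ∧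
  ∀ f : V → Fin 3,
    (∃ u ∈ boundary G R, ∃ v ∈ boundary G R, f u ≠ f v) →
    ∃ φ : V → Fin 3, (∀ u ∈ R, ∀ v ∈ R, G.Adj u v → φ u ≠ φ v) ∧
      ∀ v ∈ boundary G R, φ v ≠ f v

/-- A cocollapsible set is nontrivial if its complement has more than one vertex. -/
def NontrivialCocollapsible {V : Type} (G : SimpleGraph V) (R : Set V) : Prop :=
  Cocollapsible G R ∧ 1 < (Rᶜ : Set V).ncard

/-- The graph `H` together with the (possibly new) edge `uv`. -/
def withEdge {W : Type} (H : SimpleGraph W) (u v : W) : SimpleGraph W :=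
  H ⊔ SimpleGraph.fromEdgeSet {s(u, v)}

/-- A collapsible set `R` is tight if for any two distinct boundary vertices `u, v`
the graph `G[R] + uv` is `4`-critical. -/
def TightCollapsible {V : Type} (G : SimpleGraph V) (R : Set V) : Prop :=
  Collapsible G R ∧
  ∀ u (hu : u ∈ boundary G R) v (hv : v ∈ boundary G R), u ≠ v →
    IsKCritical (withEdge (G.induce R) ⟨u, hu.1⟩ ⟨v, hv.1⟩) 4

/-- `s(H) = |E(H)| - |V(H)| + α(H)`. -/
noncomputable def sVal {V : Type} (H : SimpleGraph V) : ℤ :=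
  (numEdges H : ℤ) - (Nat.card V : ℤ) + (_root_.indepNum H : ℤ)

/-- `H7`: the unique Ore-composition of two copies of `K4`. Vertices `0,1,2,3`
form the edge-side `K4` with replaced edge `01`; the split vertex of the second
`K4` on `{z,4,5,6}` is split so that `0` gets the edge to `4` and `1` gets the
edges to `5` and `6`. -/
def H7 : SimpleGraph (Fin 7) :=
  SimpleGraph.fromRel (fun a b =>
    ((a, b) : Fin 7 × Fin 7) ∈
      ([(0, 2), (0, 3), (1, 2), (1, 3), (2, 3), (4, 5), (4, 6), (5, 6),
        (0, 4), (1, 5), (1, 6)] : List (Fin 7 × Fin 7)))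

/-- A diamond in `G`: a subgraph isomorphic to `K4` minus an edge whose two
vertices of degree three within the subgraph (`w1` and `w2`) also have degree
three in `G`.  The vertices `e1` and `e2` are the ends of the diamond. -/
def IsDiamond {V : Type} (G : SimpleGraph V) (e1 e2 w1 w2 : V) : Prop :=
  e1 ≠ e2 ∧ e1 ≠ w1 ∧ e1 ≠ w2 ∧ e2 ≠ w1 ∧ e2 ≠ w2 ∧ w1 ≠ w2 ∧
  G.Adj w1 w2 ∧ G.Adj e1 w1 ∧ G.Adj e1 w2 ∧ G.Adj e2 w1 ∧ G.Adj e2 w2 ∧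
  deg G w1 = 3 ∧ deg G w2 = 3

/-- A triangle with a pendant edge. -/
def trianglePendant1 : SimpleGraph (Fin 4) :=
  SimpleGraph.fromRel (fun a b =>
    ((a, b) : Fin 4 × Fin 4) ∈ ([(0, 1), (1, 2), (2, 0), (0, 3)] : List (Fin 4 × Fin 4)))

/-- A triangle with a pendant path on two further vertices. -/
def trianglePendant2 : SimpleGraph (Fin 5) :=
  SimpleGraph.fromRel (fun a b =>
    ((a, b) : Fin 5 × Fin 5) ∈
      ([(0, 1), (1, 2), (2, 0), (0, 3), (3, 4)] : List (Fin 5 × Fin 5)))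

section OreAdj
variable {V1 V2 : Type} (G1 : SimpleGraph V1) (G2 : SimpleGraph V2)
    (x y : V1) (z : V2) (A : Set V2)

lemma oreCompose_adj_inl_inl {u v : V1} :
    (oreCompose G1 G2 x y z A).Adj (Sum.inl u) (Sum.inl v) ↔
      G1.Adj u v ∧ ¬((u = x ∧ v = y) ∨ (u = y ∧ v = x)) := by
  rw [oreCompose, SimpleGraph.fromRel_adj]
  constructor
  · rintro ⟨hne, h | h⟩
    · exact h
    · exact ⟨h.1.symm, fun hc => h.2 (by tauto)⟩
  · rintro ⟨hadj, hpat⟩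
    exact ⟨by simpa using hadj.ne, Or.inl ⟨hadj, hpat⟩⟩

lemma oreCompose_adj_inl_inr {u : V1} {w : {v : V2 // v ≠ z}} :
    (oreCompose G1 G2 x y z A).Adj (Sum.inl u) (Sum.inr w) ↔
      (u = x ∧ G2.Adj z w.1 ∧ w.1 ∈ A) ∨ (u = y ∧ G2.Adj z w.1 ∧ w.1 ∉ A) := by
  rw [oreCompose, SimpleGraph.fromRel_adj]
  constructor
  · rintro ⟨hne, h | h⟩
    · exact h
    · exact h.elim
  · intro h
    exact ⟨by simp, Or.inl h⟩

lemma oreCompose_adj_inr_inr {w1 w2 : {v : V2 // v ≠ z}} :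
    (oreCompose G1 G2 x y z A).Adj (Sum.inr w1) (Sum.inr w2) ↔ G2.Adj w1.1 w2.1 := by
  rw [oreCompose, SimpleGraph.fromRel_adj]
  constructor
  · rintro ⟨hne, h | h⟩
    · exact h
    · exact h.symm
  · intro h
    refine ⟨?_, Or.inl h⟩
    simp only [ne_eq, Sum.inr.injEq]
    exact fun hc => h.ne (congrArg Subtype.val hc)

end OreAdj

lemma fourOre_finite {V : Type} {G : SimpleGraph V} (h : IsFourOre G) : Finite V := by
  induction h with
  | k4 G h =>
      obtain ⟨e⟩ := h
      exact Finite.of_equiv _ e.toEquiv.symm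
  | comp G G1 G2 h1 h2 hcomp ih1 ih2 =>
      obtain ⟨x, y, z, A, hxy, -, -, ⟨e⟩⟩ := hcomp
      have : Finite _ := ih1
      have : Finite _ := ih2
      exact Finite.of_equiv _ e.toEquiv.symm

lemma sum_set_ncard {α β : Type} [Finite α] [Finite β] (T : Set (α ⊕ β)) :
    T.ncard = (Sum.inl ⁻¹' T).ncard + (Sum.inr ⁻¹' T).ncard := by
  have hdis : Disjoint (Sum.inl '' (Sum.inl ⁻¹' T) : Set (α ⊕ β)) (Sum.inr '' (Sum.inr ⁻¹' T)) := by
    rw [Set.disjoint_left]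
    rintro a ⟨u, -, rfl⟩ ⟨w, -, hc⟩
    exact Sum.inl_ne_inr hc.symm
  have hdec : T = (Sum.inl '' (Sum.inl ⁻¹' T)) ∪ (Sum.inr '' (Sum.inr ⁻¹' T)) := by
    ext a
    cases a <;> simp
  conv_lhs => rw [hdec]
  rw [Set.ncard_union_eq hdis, Set.ncard_image_of_injective _ Sum.inl_injective,
    Set.ncard_image_of_injective _ Sum.inr_injective]

lemma card_ne_subtype {β : Type} [Finite β] (z : β) :
    Nat.card {v : β // v ≠ z} = Nat.card β - 1 := by
  have h1 : Nat.card {v : β // v ≠ z} = ({z}ᶜ : Set β).ncard := by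
    rw [← Nat.card_coe_set_eq]
    exact Nat.card_congr (Equiv.subtypeEquivRight (by simp))
  rw [h1, Set.compl_eq_univ_diff, Set.ncard_diff_singleton_of_mem (Set.mem_univ z),
    Set.ncard_univ]

lemma nat_card_pos {β : Type} [Finite β] (z : β) : 1 ≤ Nat.card β := by
  have : Nonempty β := ⟨z⟩
  exact Nat.card_pos

lemma fourOre_indep {V : Type} {G : SimpleGraph V} (h : IsFourOre G) :
    ∀ T : Set V, (∀ u ∈ T, ∀ w ∈ T, ¬ G.Adj u w) → 3 * T.ncard + 1 ≤ Nat.card V := by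
  induction h with
  | k4 G hiso =>
      intro T hT
      obtain ⟨e⟩ := hiso
      have hfin : Finite _ := Finite.of_equiv _ e.toEquiv.symm
      have hle : T.ncard ≤ 1 := by
        rw [Set.ncard_le_one]
        intro a ha b hb
        by_contra hne
        have hadj : (completeGraph (Fin 4)).Adj (e a) (e b) :=
          (top_adj _ _).mpr (fun hc => hne (e.toEquiv.injective hc))
        exact hT a ha b hb (e.map_adj_iff.mp hadj)
      rw [Nat.card_congr e.toEquiv, Nat.card_eq_fintype_card, Fintype.card_fin]
      omega
  | comp G G1 G2 h1 h2 hcomp ih1 ih2 =>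
      rename_i W0 W1 W2
      intro T hT
      obtain ⟨x, y, z, A, hxy, -, -, ⟨e⟩⟩ := hcomp
      have hF1 : Finite _ := fourOre_finite h1
      have hF2 : Finite _ := fourOre_finite h2
      have hFV : Finite _ := Finite.of_equiv _ e.toEquiv.symm
      set C := oreCompose G1 G2 x y z A with hC
      set T' := ⇑e.toEquiv '' T with hT'def
      have hT' : ∀ a ∈ T', ∀ b ∈ T', ¬ C.Adj a b := by
        rintro a ⟨u, hu, rfl⟩ b ⟨w, hw, rfl⟩ hadj
        exact hT u hu w hw (e.map_adj_iff.mp hadj)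
      set T1 : Set _ := Sum.inl ⁻¹' T' with hT1def
      set W : Set {v : _ // v ≠ z} := Sum.inr ⁻¹' T' with hWdef
      set T2 : Set _ := Subtype.val '' W with hT2def
      have hcardT : T.ncard = T1.ncard + W.ncard := by
        rw [← sum_set_ncard T', hT'def, Set.ncard_image_of_injective _ e.toEquiv.injective]
      have hT2card : T2.ncard = W.ncard :=
        Set.ncard_image_of_injective _ Subtype.val_injective
      have hzT2 : z ∉ T2 := by
        rintro ⟨⟨w, hw⟩, -, hww⟩
        exact hw hww
      have hn : Nat.card W0 = Nat.card W1 + Nat.card W2 - 1 := by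
        rw [Nat.card_congr e.toEquiv, Nat.card_sum, card_ne_subtype]
        have := nat_card_pos z
        omega
      have hn2 : 1 ≤ Nat.card W2 := nat_card_pos z
      have hW2 : ∀ u ∈ T2, ∀ w ∈ T2, ¬ G2.Adj u w := by
        rintro - ⟨⟨u, hu⟩, huW, rfl⟩ - ⟨⟨w, hw⟩, hwW, rfl⟩ hadj
        exact hT' _ huW _ hwW ((oreCompose_adj_inr_inr G1 G2 x y z A).mpr hadj)
      by_cases hxyT : x ∈ T1 ∧ y ∈ T1
      · obtain ⟨hxT, hyT⟩ := hxyT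
        have hT1' : ∀ u ∈ T1 \ {y}, ∀ v ∈ T1 \ {y}, ¬ G1.Adj u v := by
          rintro u ⟨hu, hu'⟩ v ⟨hv, hv'⟩ hadj
          simp only [Set.mem_singleton_iff] at hu' hv'
          by_cases hpat : (u = x ∧ v = y) ∨ (u = y ∧ v = x)
          · rcases hpat with ⟨-, hp⟩ | ⟨hp, -⟩
            exacts [hv' hp, hu' hp]
          · exact hT' _ hu _ hv ((oreCompose_adj_inl_inl G1 G2 x y z A).mpr ⟨hadj, hpat⟩)
        have b1 := ih1 _ hT1'
        have hT2' : ∀ u ∈ insert z T2, ∀ v ∈ insert z T2, ¬ G2.Adj u v := by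
          have key : ∀ w ∈ T2, ¬ G2.Adj z w := by
            rintro - ⟨⟨w, hw⟩, hwW, rfl⟩ hadj
            by_cases hA : w ∈ A
            · exact hT' _ hxT _ hwW
                ((oreCompose_adj_inl_inr G1 G2 x y z A).mpr (Or.inl ⟨rfl, hadj, hA⟩))
            · exact hT' _ hyT _ hwW
                ((oreCompose_adj_inl_inr G1 G2 x y z A).mpr (Or.inr ⟨rfl, hadj, hA⟩))
          rintro u (rfl | hu) v (rfl | hv) hadj
          · exact G2.loopless.irrefl _ hadj
          · exact key v hv hadj
          · exact key u hu hadj.symm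
          · exact hW2 u hu v hv hadj
        have b2 := ih2 _ hT2'
        have e1 : (T1 \ {y}).ncard = T1.ncard - 1 := Set.ncard_diff_singleton_of_mem hyT
        have e2 : (insert z T2).ncard = T2.ncard + 1 := Set.ncard_insert_of_notMem hzT2
        have hT1pos : 0 < T1.ncard := (Set.ncard_pos (Set.toFinite _)).mpr ⟨y, hyT⟩
        rw [e1] at b1
        rw [e2, hT2card] at b2
        omega
      · have hT1 : ∀ u ∈ T1, ∀ v ∈ T1, ¬ G1.Adj u v := by
          intro u hu v hv hadj
          by_cases hpat : (u = x ∧ v = y) ∨ (u = y ∧ v = x)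
          · rcases hpat with ⟨rfl, rfl⟩ | ⟨rfl, rfl⟩
            exacts [hxyT ⟨hu, hv⟩, hxyT ⟨hv, hu⟩]
          · exact hT' _ hu _ hv ((oreCompose_adj_inl_inl G1 G2 x y z A).mpr ⟨hadj, hpat⟩)
        have b1 := ih1 _ hT1
        have b2 := ih2 _ hW2
        rw [hT2card] at b2
        omega

section Seam
variable {V1 V2 : Type} (G1 : SimpleGraph V1) (G2 : SimpleGraph V2)
    (x y : V1) (z : V2) (A : Set V2)

/-- Map edges of the Ore composition to edges of the pieces. -/
def seamMap (z : V2) : Sym2 (V1 ⊕ {v : V2 // v ≠ z}) → Sym2 V1 ⊕ Sym2 V2 :=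
  Sym2.lift ⟨fun a b =>
    match a, b with
    | Sum.inl u, Sum.inl v => Sum.inl s(u, v)
    | Sum.inl _, Sum.inr w => Sum.inr s(z, w.1)
    | Sum.inr w, Sum.inl _ => Sum.inr s(z, w.1)
    | Sum.inr w1, Sum.inr w2 => Sum.inr s(w1.1, w2.1),
   by
    intro a b
    rcases a with u | w <;> rcases b with v | w2 <;> simp [Sym2.eq_swap]⟩

@[simp] lemma seamMap_ll (u v : V1) :
    seamMap (V1 := V1) z s(Sum.inl u, Sum.inl v) = Sum.inl s(u, v) := rfl

@[simp] lemma seamMap_lr (u : V1) (w : {v : V2 // v ≠ z}) :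
    seamMap z s(Sum.inl u, Sum.inr w) = Sum.inr s(z, w.1) := rfl

@[simp] lemma seamMap_rr (w1 w2 : {v : V2 // v ≠ z}) :
    seamMap (V1 := V1) z s(Sum.inr w1, Sum.inr w2) = Sum.inr s(w1.1, w2.1) := rfl

lemma oreCompose_edge_cases {E : Sym2 (V1 ⊕ {v : V2 // v ≠ z})}
    (hE : E ∈ (oreCompose G1 G2 x y z A).edgeSet) :
    (∃ u v, E = s(Sum.inl u, Sum.inl v) ∧ G1.Adj u v ∧
        ¬((u = x ∧ v = y) ∨ (u = y ∧ v = x))) ∨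
    (∃ (u : V1) (w : {v : V2 // v ≠ z}), E = s(Sum.inl u, Sum.inr w) ∧
        ((u = x ∧ G2.Adj z w.1 ∧ w.1 ∈ A) ∨ (u = y ∧ G2.Adj z w.1 ∧ w.1 ∉ A))) ∨
    (∃ w1 w2, E = s(Sum.inr w1, Sum.inr w2) ∧ G2.Adj w1.1 w2.1) := by
  revert hE
  induction E using Sym2.ind with
  | _ a b =>
    intro hE
    rw [SimpleGraph.mem_edgeSet] at hE
    rcases a with u | w <;> rcases b with v | w2
    · exact Or.inl ⟨u, v, rfl, (oreCompose_adj_inl_inl G1 G2 x y z A).mp hE⟩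
    · exact Or.inr (Or.inl ⟨u, w2, rfl, (oreCompose_adj_inl_inr G1 G2 x y z A).mp hE⟩)
    · exact Or.inr (Or.inl ⟨v, w, Sym2.eq_swap,
        (oreCompose_adj_inl_inr G1 G2 x y z A).mp hE.symm⟩)
    · exact Or.inr (Or.inr ⟨w, w2, rfl, (oreCompose_adj_inr_inr G1 G2 x y z A).mp hE⟩)

lemma seam_bijOn (hxy : G1.Adj x y) :
    Set.BijOn (seamMap z) (oreCompose G1 G2 x y z A).edgeSet
      ((Sum.inl '' (G1.edgeSet \ {s(x, y)})) ∪ (Sum.inr '' G2.edgeSet)) := by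
  constructor
  · -- MapsTo
    intro E hE
    rcases oreCompose_edge_cases G1 G2 x y z A hE with
      ⟨u, v, rfl, hadj, hpat⟩ | ⟨u, w, rfl, hd⟩ | ⟨w1, w2, rfl, hadj⟩
    · refine Or.inl ⟨s(u, v), ⟨hadj, ?_⟩, by simp⟩
      simp only [Set.mem_singleton_iff, Sym2.eq_iff]
      tauto
    · refine Or.inr ⟨s(z, w.1), ?_, by simp⟩
      rcases hd with ⟨-, hadj, -⟩ | ⟨-, hadj, -⟩ <;> exact hadj
    · exact Or.inr ⟨s(w1.1, w2.1), hadj, by simp⟩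
  constructor
  · -- InjOn
    intro E1 h1 E2 h2 heq
    rcases oreCompose_edge_cases G1 G2 x y z A h1 with
      ⟨u, v, rfl, hadj, hpat⟩ | ⟨u, w, rfl, hd⟩ | ⟨w1, w2, rfl, hadj⟩ <;>
    rcases oreCompose_edge_cases G1 G2 x y z A h2 with
      ⟨u', v', rfl, hadj', hpat'⟩ | ⟨u', w', rfl, hd'⟩ | ⟨w1', w2', rfl, hadj'⟩ <;>
    simp only [seamMap_ll, seamMap_lr, seamMap_rr, Sum.inl.injEq, Sum.inr.injEq,
      reduceCtorEq] at heq
    · -- ll vs ll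
      rcases Sym2.eq_iff.mp heq with ⟨rfl, rfl⟩ | ⟨rfl, rfl⟩
      · rfl
      · exact Sym2.eq_swap
    · -- lr vs lr
      have hww : w = w' := by
        rcases Sym2.eq_iff.mp heq with ⟨-, hw⟩ | ⟨hz, -⟩
        · exact Subtype.ext hw
        · exact absurd hz.symm w'.2
      subst hww
      have huu : u = u' := by
        rcases hd with ⟨rfl, -, hA⟩ | ⟨rfl, -, hA⟩ <;>
          rcases hd' with ⟨rfl, -, hA'⟩ | ⟨rfl, -, hA'⟩ <;>
            first | rfl | exact absurd hA hA' | exact absurd hA' hA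
      rw [huu]
    · -- lr vs rr
      rcases Sym2.eq_iff.mp heq with ⟨hz, -⟩ | ⟨hz, -⟩
      · exact absurd hz.symm w1'.2
      · exact absurd hz.symm w2'.2
    · -- rr vs lr
      rcases Sym2.eq_iff.mp heq with ⟨hz, -⟩ | ⟨-, hz⟩
      · exact absurd hz w1.2
      · exact absurd hz w2.2
    · -- rr vs rr
      rcases Sym2.eq_iff.mp heq with ⟨hw1, hw2⟩ | ⟨hw1, hw2⟩
      · rw [Subtype.ext hw1, Subtype.ext hw2]
      · rw [Subtype.ext hw1, Subtype.ext hw2, Sym2.eq_swap]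
  · -- SurjOn
    rintro d (⟨E1, ⟨hE1, hne⟩, rfl⟩ | ⟨E2, hE2, rfl⟩)
    · simp only [Set.mem_singleton_iff] at hne
      revert hE1 hne
      induction E1 using Sym2.ind with
      | _ u v =>
        intro hE1 hne
        refine ⟨s(Sum.inl u, Sum.inl v), ?_, by simp⟩
        rw [SimpleGraph.mem_edgeSet, oreCompose_adj_inl_inl]
        refine ⟨hE1, fun hpat => hne ?_⟩
        rw [Sym2.eq_iff]
        tauto
    · revert hE2
      induction E2 using Sym2.ind with
      | _ w1 w2 =>
        intro hE2
        rw [SimpleGraph.mem_edgeSet] at hE2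
        by_cases h1 : w1 = z
        · have h2 : w2 ≠ z := fun hc => by rw [h1, hc] at hE2; exact G2.loopless.irrefl z hE2
          by_cases hA : w2 ∈ A
          · refine ⟨s(Sum.inl x, Sum.inr ⟨w2, h2⟩), ?_, by simp [h1]⟩
            rw [SimpleGraph.mem_edgeSet, oreCompose_adj_inl_inr]
            exact Or.inl ⟨rfl, by show G2.Adj z w2; rw [← h1]; exact hE2, hA⟩
          · refine ⟨s(Sum.inl y, Sum.inr ⟨w2, h2⟩), ?_, by simp [h1]⟩
            rw [SimpleGraph.mem_edgeSet, oreCompose_adj_inl_inr]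
            exact Or.inr ⟨rfl, by show G2.Adj z w2; rw [← h1]; exact hE2, hA⟩
        · by_cases h2 : w2 = z
          · by_cases hA : w1 ∈ A
            · refine ⟨s(Sum.inl x, Sum.inr ⟨w1, h1⟩), ?_, ?_⟩
              · rw [SimpleGraph.mem_edgeSet, oreCompose_adj_inl_inr]
                exact Or.inl ⟨rfl, by show G2.Adj z w1; rw [← h2]; exact hE2.symm, hA⟩
              · rw [seamMap_lr, h2]
                exact congrArg Sum.inr Sym2.eq_swap
            · refine ⟨s(Sum.inl y, Sum.inr ⟨w1, h1⟩), ?_, ?_⟩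
              · rw [SimpleGraph.mem_edgeSet, oreCompose_adj_inl_inr]
                exact Or.inr ⟨rfl, by show G2.Adj z w1; rw [← h2]; exact hE2.symm, hA⟩
              · rw [seamMap_lr, h2]
                exact congrArg Sum.inr Sym2.eq_swap
          · refine ⟨s(Sum.inr ⟨w1, h1⟩, Sum.inr ⟨w2, h2⟩), ?_, by simp⟩
            rw [SimpleGraph.mem_edgeSet, oreCompose_adj_inr_inr]
            exact hE2

end Seam

lemma oreCompose_numEdges {V1 V2 : Type} [Finite V1] [Finite V2]
    (G1 : SimpleGraph V1) (G2 : SimpleGraph V2) (x y : V1) (z : V2) (A : Set V2)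
    (hxy : G1.Adj x y) :
    numEdges (oreCompose G1 G2 x y z A) + 1 = numEdges G1 + numEdges G2 := by
  have hb := seam_bijOn G1 G2 x y z A hxy
  have hdisj : Disjoint (Sum.inl '' (G1.edgeSet \ {s(x, y)}) : Set (Sym2 V1 ⊕ Sym2 V2))
      (Sum.inr '' G2.edgeSet) := by
    rw [Set.disjoint_left]
    rintro a ⟨u, -, rfl⟩ ⟨w, -, hc⟩
    exact Sum.inl_ne_inr hc.symm
  have h1 : (oreCompose G1 G2 x y z A).edgeSet.ncard
      = ((Sum.inl '' (G1.edgeSet \ {s(x, y)})) ∪ (Sum.inr '' G2.edgeSet)).ncard := by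
    rw [← hb.image_eq, Set.ncard_image_of_injOn hb.injOn]
  have h2 : ((Sum.inl '' (G1.edgeSet \ {s(x, y)})) ∪ (Sum.inr '' G2.edgeSet)).ncard
      = (G1.edgeSet \ {s(x, y)}).ncard + G2.edgeSet.ncard := by
    rw [Set.ncard_union_eq hdisj, Set.ncard_image_of_injective _ Sum.inl_injective,
      Set.ncard_image_of_injective _ Sum.inr_injective]
  have h3 : (G1.edgeSet \ {s(x, y)}).ncard = G1.edgeSet.ncard - 1 :=
    Set.ncard_diff_singleton_of_mem ((SimpleGraph.mem_edgeSet G1).mpr hxy)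
  have h4 : 1 ≤ G1.edgeSet.ncard :=
    (Set.ncard_pos (Set.toFinite _)).mpr ⟨s(x, y), (SimpleGraph.mem_edgeSet G1).mpr hxy⟩
  rw [numEdges, numEdges, numEdges, Nat.card_coe_set_eq, Nat.card_coe_set_eq,
    Nat.card_coe_set_eq]
  omega

lemma fourOre_edges {V : Type} {G : SimpleGraph V} (h : IsFourOre G) :
    3 * numEdges G + 2 = 5 * Nat.card V := by
  induction h with
  | k4 G hiso =>
      rename_i W0
      obtain ⟨e⟩ := hiso
      have hfin : Finite W0 := Finite.of_equiv _ e.toEquiv.symm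
      have h1 : numEdges G = 6 := by
        rw [numEdges, Nat.card_congr e.mapEdgeSet]
        show Nat.card (⊤ : SimpleGraph (Fin 4)).edgeSet = 6
        rw [Nat.card_eq_fintype_card, ← SimpleGraph.edgeFinset_card,
          SimpleGraph.card_edgeFinset_top_eq_card_choose_two]
        decide
      rw [h1, Nat.card_congr e.toEquiv, Nat.card_eq_fintype_card, Fintype.card_fin]
  | comp G G1 G2 h1 h2 hcomp ih1 ih2 =>
      rename_i W0 W1 W2
      obtain ⟨x, y, z, A, hxy, -, -, ⟨e⟩⟩ := hcomp
      have hF1 : Finite W1 := fourOre_finite h1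
      have hF2 : Finite W2 := fourOre_finite h2
      have hne : numEdges G = numEdges (oreCompose G1 G2 x y z A) :=
        Nat.card_congr e.mapEdgeSet
      have hcount := oreCompose_numEdges G1 G2 x y z A hxy
      have hn : Nat.card W0 = Nat.card W1 + Nat.card W2 - 1 := by
        rw [Nat.card_congr e.toEquiv, Nat.card_sum, card_ne_subtype]
        have := nat_card_pos z
        omega
      have hn2 := nat_card_pos z
      omega

/-- If `G` is a `4`-Ore graph with `p(G) = 1.8` and `v` is a vertex
of `G`, then every maximum independent set of `D3(G)` contains a vertex of the
closed neighborhood of `v` in `G`. -/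
theorem statement_10 {V : Type} [Fintype V] (G : SimpleGraph V)
    (hOre : IsFourOre G) (hp : potential G = 9/5) (v : V)
    (I : Set V) (hI3 : I ⊆ D3set G)
    (hIindep : ∀ u ∈ I, ∀ w ∈ I, ¬ G.Adj u w)
    (hImax : I.ncard = _root_.indepNum (D3 G)) :
    ∃ u ∈ I, u = v ∨ G.Adj v u := by
  have hedge := fourOre_edges hOre
  have hq : (Nat.card V : ℚ) = 3 * (_root_.indepNum (D3 G) : ℚ) + 1 := by
    have h1 : (3 : ℚ) * (numEdges G : ℚ) + 2 = 5 * (Nat.card V : ℚ) := by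
      exact_mod_cast hedge
    simp only [potential] at hp
    linarith
  have hn : Nat.card V = 3 * _root_.indepNum (D3 G) + 1 := by exact_mod_cast hq
  by_contra hcon
  push_neg at hcon
  have hvI : v ∉ I := fun hv => (hcon v hv).1 rfl
  have hindep : ∀ u ∈ insert v I, ∀ w ∈ insert v I, ¬ G.Adj u w := by
    rintro u (rfl | hu) w (rfl | hw) hadj
    · exact G.loopless.irrefl _ hadj
    · exact (hcon w hw).2 hadj
    · exact (hcon u hu).2 hadj.symm
    · exact hIindep u hu w hw hadj
  have hb := fourOre_indep hOre _ hindep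
  rw [Set.ncard_insert_of_notMem hvI, hImax] at hb
  omega
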